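/- Let 2 ≤ δ ≤ 8. For any two conic classes Q₁, Q₂ in the del Pezzo lattice of rank 1+δ there exists an element g of the Weyl group W_δ with g(Q₁) = Q₂; that is, W_δ acts transitively on the set of conic classes. -/

import Mathlib

/-- A class in the del Pezzo lattice of rank `1 + δ`: the pair `(a, b)`
represents `a·ℓ − b₁e₁ − ⋯ − b_δ e_δ`. -/
abbrev Cls (δ : ℕ) : Type := ℤ × (Fin δ → ℤ)

/-- The intersection product: `(a;b)·(a';b') = a a' − Σ bᵢ bᵢ'`. -/
def ip {δ : ℕ} (x y : Cls δ) : ℤ := x.1 * y.1 - ∑ i, x.2 i * y.2 i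

/-- The canonical class `K = −3ℓ + e₁ + ⋯ + e_δ`, i.e. `(−3; −1, …, −1)`. -/
def Kcls (δ : ℕ) : Cls δ := (-3, fun _ => -1)

/-- A conic class: `Q·Q = 0` and `K·Q = −2`. -/
def IsConic {δ : ℕ} (Q : Cls δ) : Prop := ip Q Q = 0 ∧ ip (Kcls δ) Q = -2

/-- A `(−1)`-class: `L·L = −1` and `K·L = −1`. -/
def IsMinusOne {δ : ℕ} (L : Cls δ) : Prop := ip L L = -1 ∧ ip (Kcls δ) L = -1

/-- Membership in the Weyl group `W_δ`: a ℤ-linear automorphism of the lattice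
preserving the intersection form and fixing the canonical class. -/
def IsWeyl {δ : ℕ} (g : Cls δ ≃ₗ[ℤ] Cls δ) : Prop :=
  (∀ x y : Cls δ, ip (g x) (g y) = ip x y) ∧ g (Kcls δ) = Kcls δ

namespace DP

variable {δ : ℕ}

lemma ip_add_left (x y z : Cls δ) : ip (x + y) z = ip x z + ip y z := by
  simp only [ip, Prod.fst_add, Prod.snd_add, Pi.add_apply, add_mul, Finset.sum_add_distrib]
  ring

lemma ip_smul_left (c : ℤ) (x z : Cls δ) : ip (c • x) z = c * ip x z := by
  simp only [ip, Prod.smul_fst, Prod.smul_snd, Pi.smul_apply, smul_eq_mul, mul_assoc,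
    ← Finset.mul_sum]
  ring

lemma ip_comm (x y : Cls δ) : ip x y = ip y x := by
  simp only [ip]
  rw [mul_comm]
  congr 1
  exact Finset.sum_congr rfl fun i _ => mul_comm _ _

lemma ip_add_right (x y z : Cls δ) : ip z (x + y) = ip z x + ip z y := by
  rw [ip_comm, ip_add_left, ip_comm x z, ip_comm y z]

lemma ip_smul_right (c : ℤ) (x z : Cls δ) : ip z (c • x) = c * ip z x := by
  rw [ip_comm, ip_smul_left, ip_comm]

/-- The reflection in a root `α` as a linear map. -/
def reflMap (α : Cls δ) : Cls δ →ₗ[ℤ] Cls δ where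
  toFun x := x + ip x α • α
  map_add' x y := by
    show x + y + ip (x + y) α • α = x + ip x α • α + (y + ip y α • α)
    rw [ip_add_left, add_smul]; abel
  map_smul' c x := by
    show c • x + ip (c • x) α • α = (RingHom.id ℤ) c • (x + ip x α • α)
    rw [ip_smul_left, RingHom.id_apply, mul_smul, smul_add]

lemma reflMap_apply (α x : Cls δ) : reflMap α x = x + ip x α • α := rfl

lemma reflMap_invol (α : Cls δ) (hα : ip α α = -2) : Function.Involutive (reflMap α) := by
  intro x
  simp only [reflMap_apply, ip_add_left, ip_smul_left, hα]
  have h : (ip x α + ip x α * -2) = -ip x α := by ring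
  rw [h, neg_smul]
  abel

/-- The reflection in a root `α` as a linear equivalence. -/
def reflE (α : Cls δ) (hα : ip α α = -2) : Cls δ ≃ₗ[ℤ] Cls δ :=
  LinearEquiv.ofInvolutive (reflMap α) (reflMap_invol α hα)

lemma reflE_apply (α : Cls δ) (hα : ip α α = -2) (x : Cls δ) :
    reflE α hα x = x + ip x α • α := rfl

lemma isWeyl_reflE (α : Cls δ) (hα : ip α α = -2) (hK : ip (Kcls δ) α = 0) :
    IsWeyl (reflE α hα) := by
  constructor
  · intro x y
    rw [reflE_apply, reflE_apply, ip_add_left, ip_add_right, ip_add_right, ip_smul_left,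
      ip_smul_right, ip_smul_right, ip_smul_left, hα, ip_comm α y]
    ring
  · rw [reflE_apply, hK, zero_smul, add_zero]

lemma IsWeyl.trans {g g' : Cls δ ≃ₗ[ℤ] Cls δ} (hg : IsWeyl g) (hg' : IsWeyl g') :
    IsWeyl (g.trans g') := by
  refine ⟨fun x y => ?_, ?_⟩
  · rw [LinearEquiv.trans_apply, LinearEquiv.trans_apply, hg'.1, hg.1]
  · rw [LinearEquiv.trans_apply, hg.2, hg'.2]

lemma IsWeyl.symm {g : Cls δ ≃ₗ[ℤ] Cls δ} (hg : IsWeyl g) : IsWeyl g.symm := by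
  refine ⟨fun x y => ?_, ?_⟩
  · have h := hg.1 (g.symm x) (g.symm y)
    rw [g.apply_symm_apply, g.apply_symm_apply] at h
    exact h.symm
  · conv_lhs => rw [← hg.2]
    exact g.symm_apply_apply _

lemma IsWeyl.conic {g : Cls δ ≃ₗ[ℤ] Cls δ} (hg : IsWeyl g) {Q : Cls δ} (hQ : IsConic Q) :
    IsConic (g Q) := by
  refine ⟨?_, ?_⟩
  · rw [hg.1]; exact hQ.1
  · conv_lhs => rw [← hg.2]
    rw [hg.1]; exact hQ.2

lemma conic_iff (a : ℤ) (b : Fin δ → ℤ) :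
    IsConic (a, b) ↔ (∑ i, b i * b i = a * a ∧ ∑ i, b i = 3 * a - 2) := by
  have h1 : ip ((a, b) : Cls δ) (a, b) = a * a - ∑ i, b i * b i := rfl
  have h2 : ip (Kcls δ) (a, b) = -3 * a - ∑ i, (-1) * b i := rfl
  have h3 : ∑ i, (-1 : ℤ) * b i = -∑ i, b i := by
    rw [← Finset.sum_neg_distrib]
    exact Finset.sum_congr rfl fun i _ => by ring
  unfold IsConic
  rw [h1, h2, h3]
  constructor
  · rintro ⟨u, v⟩; constructor <;> linarith
  · rintro ⟨u, v⟩; constructor <;> linarith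

lemma cauchy (a : ℤ) (b : Fin δ → ℤ) (hq : ∑ i, b i * b i = a * a)
    (hs : ∑ i, b i = 3 * a - 2) : (3 * a - 2) ^ 2 ≤ (δ : ℤ) * (a * a) := by
  have h := sq_sum_le_card_mul_sum_sq (s := (Finset.univ : Finset (Fin δ))) (f := b)
  rw [hs] at h
  have h2 : ∑ i, b i ^ 2 = a * a := by rw [← hq]; exact Finset.sum_congr rfl fun i _ => sq (b i)
  rw [h2, Finset.card_univ, Fintype.card_fin] at h
  exact h

/-- Conic classes have positive degree. -/
lemma conic_a_pos (h8 : δ ≤ 8) (a : ℤ) (b : Fin δ → ℤ) (hq : ∑ i, b i * b i = a * a)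
    (hs : ∑ i, b i = 3 * a - 2) : 1 ≤ a := by
  have h := cauchy a b hq hs
  have hd : (δ : ℤ) ≤ 8 := by exact_mod_cast h8
  have haa : 0 ≤ a * a := mul_self_nonneg a
  by_contra hc
  push_neg at hc
  nlinarith

/-- Indicator of three indices. -/
def ind3 (i j k : Fin δ) : Fin δ → ℤ := fun l =>
  (if l = i then 1 else 0) + (if l = j then 1 else 0) + (if l = k then 1 else 0)

lemma sum_mul_ind3 (i j k : Fin δ) (c : Fin δ → ℤ) :
    ∑ l, c l * ind3 i j k l = c i + c j + c k := by
  simp [ind3, mul_add, Finset.sum_add_distrib, mul_ite, mul_one, mul_zero,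
    Finset.sum_ite_eq']

lemma ind3_i {i j k : Fin δ} (hij : i ≠ j) (hik : i ≠ k) : ind3 i j k i = 1 := by
  simp [ind3, hij, hik]

lemma ind3_j {i j k : Fin δ} (hij : i ≠ j) (hjk : j ≠ k) : ind3 i j k j = 1 := by
  simp [ind3, Ne.symm hij, hjk]

lemma ind3_k {i j k : Fin δ} (hik : i ≠ k) (hjk : j ≠ k) : ind3 i j k k = 1 := by
  simp [ind3, Ne.symm hik, Ne.symm hjk]

lemma ip_root_self {i j k : Fin δ} (hij : i ≠ j) (hik : i ≠ k) (hjk : j ≠ k) :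
    ip (((1 : ℤ), ind3 i j k) : Cls δ) ((1 : ℤ), ind3 i j k) = -2 := by
  show (1 : ℤ) * 1 - ∑ l, ind3 i j k l * ind3 i j k l = -2
  rw [sum_mul_ind3, ind3_i hij hik, ind3_j hij hjk, ind3_k hik hjk]
  norm_num

lemma ip_K_root {i j k : Fin δ} (hij : i ≠ j) (hik : i ≠ k) (hjk : j ≠ k) :
    ip (Kcls δ) (((1 : ℤ), ind3 i j k) : Cls δ) = 0 := by
  show (-3 : ℤ) * 1 - ∑ l, (-1 : ℤ) * ind3 i j k l = 0
  rw [sum_mul_ind3 i j k (fun _ => (-1 : ℤ))]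
  norm_num

lemma ip_root (a : ℤ) (b : Fin δ → ℤ) (i j k : Fin δ) :
    ip ((a, b) : Cls δ) (((1 : ℤ), ind3 i j k) : Cls δ) = a - (b i + b j + b k) := by
  show a * 1 - ∑ l, b l * ind3 i j k l = _
  rw [sum_mul_ind3]
  ring

lemma sq_sub_nonneg (x : ℤ) : 0 ≤ x * x - x := by
  rcases le_or_gt x 0 with h | h
  · nlinarith
  · nlinarith

/-- The descent lemma: a conic class with `a ≥ 2` admits a triple of indices
whose coefficients sum to more than `a`. -/
lemma descent (h8 : δ ≤ 8) (h3 : 3 ≤ δ) (a : ℤ) (b : Fin δ → ℤ)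
    (hq : ∑ i, b i * b i = a * a) (hs : ∑ i, b i = 3 * a - 2) (ha : 2 ≤ a) :
    ∃ i j k : Fin δ, i ≠ j ∧ i ≠ k ∧ j ≠ k ∧ a + 1 ≤ b i + b j + b k := by
  by_contra hcon
  push_neg at hcon
  have hne1 : (Finset.univ : Finset (Fin δ)).Nonempty := by
    rw [← Finset.card_pos, Finset.card_univ, Fintype.card_fin]; omega
  obtain ⟨i₁, -, hmax1⟩ := Finset.exists_max_image Finset.univ b hne1
  have hne2 : (Finset.univ.erase i₁).Nonempty := by
    rw [← Finset.card_pos, Finset.card_erase_of_mem (Finset.mem_univ _), Finset.card_univ,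
      Fintype.card_fin]; omega
  obtain ⟨i₂, hm2, hmax2⟩ := Finset.exists_max_image _ b hne2
  have hne3 : ((Finset.univ.erase i₁).erase i₂).Nonempty := by
    rw [← Finset.card_pos, Finset.card_erase_of_mem hm2,
      Finset.card_erase_of_mem (Finset.mem_univ _), Finset.card_univ, Fintype.card_fin]; omega
  obtain ⟨i₃, hm3, hmax3⟩ := Finset.exists_max_image _ b hne3
  have h21 : i₂ ≠ i₁ := Finset.ne_of_mem_erase hm2
  have h32 : i₃ ≠ i₂ := Finset.ne_of_mem_erase hm3
  have h31 : i₃ ≠ i₁ := Finset.ne_of_mem_erase (Finset.mem_of_mem_erase hm3)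
  have hb21 : b i₂ ≤ b i₁ := hmax1 i₂ (Finset.mem_univ _)
  have hb32 : b i₃ ≤ b i₂ := hmax2 i₃ (Finset.mem_of_mem_erase hm3)
  have hstop : b i₁ + b i₂ + b i₃ ≤ a := by
    have h := hcon i₁ i₂ i₃ (Ne.symm h21) (Ne.symm h31) (Ne.symm h32)
    omega
  set R : Finset (Fin δ) := ((Finset.univ.erase i₁).erase i₂).erase i₃ with hR
  have hcard : R.card = δ - 3 := by
    rw [hR, Finset.card_erase_of_mem hm3, Finset.card_erase_of_mem hm2,
      Finset.card_erase_of_mem (Finset.mem_univ _), Finset.card_univ, Fintype.card_fin]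
    omega
  have hsplit : b i₁ + (b i₂ + (b i₃ + ∑ l ∈ R, b l)) = 3 * a - 2 := by
    rw [hR, Finset.add_sum_erase _ b hm3, Finset.add_sum_erase _ b hm2,
      Finset.add_sum_erase _ b (Finset.mem_univ _), hs]
  have hub : ∑ l ∈ R, b l ≤ R.card • b i₃ :=
    Finset.sum_le_card_nsmul R b (b i₃) fun x hx => hmax3 x (Finset.mem_of_mem_erase hx)
  rw [hcard, nsmul_eq_mul] at hub
  have hd5 : ((δ - 3 : ℕ) : ℤ) ≤ 5 := by
    have : δ - 3 ≤ 5 := by omega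
    exact_mod_cast this
  have hdn : (0 : ℤ) ≤ ((δ - 3 : ℕ) : ℤ) := Int.natCast_nonneg _
  have hr1 : 1 ≤ b i₃ := by
    by_contra hh
    push_neg at hh
    have h0 : ((δ - 3 : ℕ) : ℤ) * b i₃ ≤ 0 := mul_nonpos_of_nonneg_of_nonpos hdn (by omega)
    omega
  have hub5 : ∑ l ∈ R, b l ≤ 5 * b i₃ := by
    have : ((δ - 3 : ℕ) : ℤ) * b i₃ ≤ 5 * b i₃ :=
      mul_le_mul_of_nonneg_right hd5 (by omega)
    omega
  have hall : ∀ l, b l ≤ b i₃ ∨ l = i₁ ∨ l = i₂ ∨ l = i₃ := by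
    intro l
    by_cases e1 : l = i₁
    · right; left; exact e1
    by_cases e2 : l = i₂
    · right; right; left; exact e2
    by_cases e3 : l = i₃
    · right; right; right; exact e3
    left
    exact hmax3 l (by simp [Finset.mem_erase, e1, e2])
  have hcase : (a = 3 ∧ b i₁ = 1 ∧ b i₂ = 1 ∧ b i₃ = 1) ∨
      (a = 6 ∧ b i₁ = 2 ∧ b i₂ = 2 ∧ b i₃ = 2) := by omega
  have hd8 : ((δ : ℕ) : ℤ) ≤ 8 := by exact_mod_cast h8
  have hconst : ∑ _l : Fin δ, (1 : ℤ) = (δ : ℤ) := by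
    simp [Finset.card_univ]
  rcases hcase with ⟨ha3, hb1, hb2, hb3⟩ | ⟨ha6, hb1, hb2, hb3⟩
  · -- a = 3 : all coefficients ≤ 1, sum 7, sum of squares 9
    subst ha3
    have hle1 : ∀ l, b l ≤ 1 := by
      intro l
      rcases hall l with h | h | h | h
      · omega
      all_goals (rw [h]; omega)
    have hsum1 : ∑ l, ((1 : ℤ) - b l) = (δ : ℤ) - 7 := by
      rw [Finset.sum_sub_distrib, hconst, hs]; ring
    have hge0 : ∀ l, 0 ≤ b l := by
      intro l
      have hterm : (1 : ℤ) - b l ≤ (δ : ℤ) - 7 := by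
        rw [← hsum1]
        exact Finset.single_le_sum (f := fun m => (1 : ℤ) - b m)
          (fun m _ => by show (0 : ℤ) ≤ 1 - b m; have := hle1 m; omega) (Finset.mem_univ l)
      omega
    have hsq : ∀ l, b l * b l = b l := by
      intro l
      have h0 := hge0 l
      have h1 := hle1 l
      have : b l = 0 ∨ b l = 1 := by omega
      rcases this with e | e <;> rw [e] <;> ring
    have : ∑ l, b l * b l = ∑ l, b l := Finset.sum_congr rfl fun l _ => hsq l
    rw [hq, hs] at this
    omega
  · -- a = 6 : all coefficients ≤ 2, sum 16, sum of squares 36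
    subst ha6
    have hle2 : ∀ l, b l ≤ 2 := by
      intro l
      rcases hall l with h | h | h | h
      · omega
      all_goals (rw [h]; omega)
    have hsum2 : ∑ l, ((2 : ℤ) - b l) = 2 * (δ : ℤ) - 16 := by
      rw [Finset.sum_sub_distrib, hs]
      have : ∑ _l : Fin δ, (2 : ℤ) = 2 * (δ : ℤ) := by
        simp [Finset.card_univ]; ring
      rw [this]; ring
    have hnn : 0 ≤ ∑ l, ((2 : ℤ) - b l) :=
      Finset.sum_nonneg fun l _ => by have := hle2 l; omega
    have hzero : ∑ l, ((2 : ℤ) - b l) = 0 := by omega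
    have hall2 : ∀ l, b l = 2 := by
      intro l
      have h := (Finset.sum_eq_zero_iff_of_nonneg
        (fun m (_ : m ∈ Finset.univ) => by have := hle2 m; omega)).mp hzero l (Finset.mem_univ l)
      omega
    have : ∑ l, b l * b l = ∑ _l : Fin δ, (4 : ℤ) :=
      Finset.sum_congr rfl fun l _ => by rw [hall2 l]; ring
    rw [hq] at this
    have h4 : ∑ _l : Fin δ, (4 : ℤ) = 4 * (δ : ℤ) := by
      simp [Finset.card_univ]; ring
    rw [h4] at this
    omega

/-- Permutations of the exceptional coordinates as Weyl elements. -/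
def permE (σ : Equiv.Perm (Fin δ)) : Cls δ ≃ₗ[ℤ] Cls δ :=
  LinearEquiv.prodCongr (LinearEquiv.refl ℤ ℤ) (LinearEquiv.funCongrLeft ℤ ℤ σ)

lemma permE_apply (σ : Equiv.Perm (Fin δ)) (x : Cls δ) :
    permE σ x = (x.1, fun l => x.2 (σ l)) := rfl

lemma isWeyl_permE (σ : Equiv.Perm (Fin δ)) : IsWeyl (permE σ) := by
  constructor
  · intro x y
    rw [permE_apply, permE_apply]
    show x.1 * y.1 - ∑ l, x.2 (σ l) * y.2 (σ l) = x.1 * y.1 - ∑ l, x.2 l * y.2 l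
    rw [Equiv.sum_comp σ (fun l => x.2 l * y.2 l)]
  · rw [permE_apply]
    rfl

lemma key (h1 : 2 ≤ δ) (h2 : δ ≤ 8) :
    ∀ n : ℕ, ∀ Q : Cls δ, Q.1.toNat = n → IsConic Q →
      ∃ g : Cls δ ≃ₗ[ℤ] Cls δ, IsWeyl g ∧
        g Q = (((1 : ℤ), fun j => if (j : ℕ) = 0 then (1 : ℤ) else 0) : Cls δ) := by
  intro n
  induction n using Nat.strong_induction_on with
  | _ n IH =>
    rintro ⟨a, b⟩ hn hQ
    rw [conic_iff] at hQ
    obtain ⟨hq, hs⟩ := hQ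
    have ha1 : 1 ≤ a := conic_a_pos h2 a b hq hs
    rcases eq_or_lt_of_le ha1 with he | ha2
    · -- base case a = 1
      have ha : a = 1 := he.symm
      subst ha
      have hzero : ∑ l, (b l * b l - b l) = 0 := by
        rw [Finset.sum_sub_distrib, hq, hs]; ring
      have hb01 : ∀ l, b l = 0 ∨ b l = 1 := by
        intro l
        have h := (Finset.sum_eq_zero_iff_of_nonneg
          (fun m (_ : m ∈ Finset.univ) => sq_sub_nonneg (b m))).mp hzero l (Finset.mem_univ l)
        have h2 : b l * (b l - 1) = 0 := by ring_nf; ring_nf at h; omega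
        rcases mul_eq_zero.mp h2 with e | e
        · left; exact e
        · right; omega
      have hsne : ∑ l, b l ≠ 0 := by rw [hs]; norm_num
      obtain ⟨i₀, -, hi₀⟩ := Finset.exists_ne_zero_of_sum_ne_zero hsne
      have hbi₀ : b i₀ = 1 := by
        rcases hb01 i₀ with e | e
        · exact absurd e hi₀
        · exact e
      have hrest : ∀ l, l ≠ i₀ → b l = 0 := by
        intro l hl
        have hsum0 : ∑ x ∈ Finset.univ.erase i₀, b x = 0 := by
          have h := Finset.add_sum_erase Finset.univ b (Finset.mem_univ i₀)
          rw [hs] at h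
          omega
        exact (Finset.sum_eq_zero_iff_of_nonneg
          (fun x _ => by rcases hb01 x with e | e <;> omega)).mp hsum0 l
          (Finset.mem_erase.mpr ⟨hl, Finset.mem_univ l⟩)
      have hδ0 : 0 < δ := by omega
      set z : Fin δ := ⟨0, hδ0⟩ with hz
      refine ⟨permE (Equiv.swap i₀ z), isWeyl_permE _, ?_⟩
      rw [permE_apply]
      refine Prod.ext rfl ?_
      funext j
      show b (Equiv.swap i₀ z j) = if (j : ℕ) = 0 then 1 else 0
      by_cases hj : j = z
      · subst hj
        rw [Equiv.swap_apply_right, hbi₀]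
        simp [hz]
      · have hσ : Equiv.swap i₀ z j ≠ i₀ := by
          intro h
          exact hj ((Equiv.swap i₀ z).injective (h.trans (Equiv.swap_apply_right i₀ z).symm))
        rw [hrest _ hσ]
        have hj0 : (j : ℕ) ≠ 0 := fun h => hj (Fin.ext h)
        simp [hj0]
    · -- inductive step a ≥ 2
      have h3 : 3 ≤ δ := by
        by_contra hh
        have hδ2 : δ = 2 := by omega
        subst hδ2
        have hca := cauchy a b hq hs
        norm_num at hca
        nlinarith
      obtain ⟨i, j, k, hij, hik, hjk, htr⟩ := descent h2 h3 a b hq hs (by omega)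
      have hαα : ip (((1 : ℤ), ind3 i j k) : Cls δ) ((1 : ℤ), ind3 i j k) = -2 :=
        ip_root_self hij hik hjk
      set Q' : Cls δ := reflE ((1 : ℤ), ind3 i j k) hαα ((a, b) : Cls δ) with hQ'
      have hW : IsWeyl (reflE (((1 : ℤ), ind3 i j k) : Cls δ) hαα) :=
        isWeyl_reflE _ hαα (ip_K_root hij hik hjk)
      have hQ'c : IsConic Q' := IsWeyl.conic hW ((conic_iff a b).mpr ⟨hq, hs⟩)
      have hQ'1 : Q'.1 = 2 * a - (b i + b j + b k) := by
        rw [hQ', reflE_apply, ip_root]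
        show a + (a - (b i + b j + b k)) • (1 : ℤ) = _
        rw [smul_eq_mul]; ring
      have hQ'c' := (conic_iff Q'.1 Q'.2).mp (by rw [Prod.mk.eta]; exact hQ'c)
      have ha'1 : 1 ≤ Q'.1 := conic_a_pos h2 Q'.1 Q'.2 hQ'c'.1 hQ'c'.2
      have hlt : Q'.1.toNat < n := by
        have hn' : a.toNat = n := hn
        omega
      obtain ⟨g, hg, hgQ⟩ := IH Q'.1.toNat hlt Q' rfl hQ'c
      refine ⟨(reflE ((1 : ℤ), ind3 i j k) hαα).trans g, IsWeyl.trans hW hg, ?_⟩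
      rw [LinearEquiv.trans_apply, ← hQ', hgQ]

end DP

theorem stmt3 (δ : ℕ) (h1 : 2 ≤ δ) (h2 : δ ≤ 8) (Q₁ Q₂ : Cls δ)
    (hQ₁ : IsConic Q₁) (hQ₂ : IsConic Q₂) :
    ∃ g : Cls δ ≃ₗ[ℤ] Cls δ, IsWeyl g ∧ g Q₁ = Q₂ := by
  obtain ⟨g₁, hg₁, e₁⟩ := DP.key h1 h2 Q₁.1.toNat Q₁ rfl hQ₁
  obtain ⟨g₂, hg₂, e₂⟩ := DP.key h1 h2 Q₂.1.toNat Q₂ rfl hQ₂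
  exact ⟨g₁.trans g₂.symm, DP.IsWeyl.trans hg₁ (DP.IsWeyl.symm hg₂), by
    rw [LinearEquiv.trans_apply, e₁, ← e₂, g₂.symm_apply_apply]⟩
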